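/- Let r ≥ 1 be an integer and let E be the set of positive integers n not expressible as n = x² + 3y² + 9z² + 9^r·w² with x, y, z, w ∈ ℤ. Then E cannot be written as a union of fewer than r+1 admissible arithmetic progressions: if E = A_{a₁,m₁} ∪ ... ∪ A_{a_t,m_t} with each A_{a_i,m_i} an admissible arithmetic progression, then t ≥ r + 1. -/

import Mathlib

/-- The arithmetic progression `A_{a,m} = {a + m·x : x ∈ ℕ ∪ {0}}`. -/
def AP (a m : ℕ) : Set ℕ := {n | ∃ x : ℕ, n = a + m * x}

/-- `A_{a,m}` (with `0 < a < m`) is admissible if `ord_p a < ord_p m`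
for every prime `p` dividing `m`. -/
def Admissible (a m : ℕ) : Prop :=
  0 < a ∧ a < m ∧ ∀ p : ℕ, p.Prime → p ∣ m → padicValNat p a < padicValNat p m

set_option linter.deprecated false
set_option linter.unusedVariables false
set_option linter.unusedTactic false

/-- square mod 3 -/
lemma sq3 (y : ℤ) : (3:ℤ) ∣ y ∨ y^2 % 3 = 1 := by
  have h : y % 3 = 0 ∨ y % 3 = 1 ∨ y % 3 = 2 := by omega
  obtain ⟨q, hq⟩ : ∃ q, y = 3*q + y % 3 := ⟨y/3, by omega⟩
  rcases h with h | h | h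
  · left; exact ⟨q, by omega⟩
  · right
    have : y^2 = 3*(3*q^2 + 2*q) + 1 := by rw [hq, h]; ring
    omega
  · right
    have : y^2 = 3*(3*q^2 + 4*q + 1) + 1 := by rw [hq, h]; ring
    omega

lemma L1 : ∀ j:ℕ, ∀ u v y : ℤ, 3*u^2+3*v^2+y^2 ≠ 2*9^j := by
  intro j
  induction j with
  | zero =>
    intro u v y h
    norm_num at h
    rcases sq3 y with ⟨y1, rfl⟩ | hy
    · have hd : (3:ℤ) ∣ 2 := ⟨u^2 + v^2 + 3*y1^2, by linarith [h]⟩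
      norm_num at hd
    · have : y^2 = 2 - 3*(u^2+v^2) := by linarith [h]
      omega
  | succ j ih =>
    intro u v y h
    have h9 : (9:ℤ)^(j+1) = 3*(3*9^j) := by ring
    rcases sq3 y with ⟨y1, rfl⟩ | hy
    · -- u^2+v^2+3 y1^2 = 6*9^j
      have h2 : u^2 + v^2 + 3*y1^2 = 6*9^j := by nlinarith [h]
      rcases sq3 u with ⟨u1, rfl⟩ | hu
      · rcases sq3 v with ⟨v1, rfl⟩ | hv
        · exact ih u1 v1 y1 (by nlinarith [h2])
        · have : v^2 = 6*9^j - 9*u1^2 - 3*y1^2 := by nlinarith [h2]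
          omega
      · rcases sq3 v with ⟨v1, rfl⟩ | hv
        · have : u^2 = 6*9^j - 9*v1^2 - 3*y1^2 := by nlinarith [h2]
          omega
        · have h3 : u^2 + v^2 = 3*(2*9^j - y1^2) := by nlinarith [h2]
          omega
    · have : y^2 = 3*(2*(3*9^j) - u^2 - v^2) := by rw [h9] at h; linarith [h]
      omega

lemma L2 (k:ℕ) (x y z : ℤ) : x^2+3*y^2+9*z^2 ≠ 2*3^(2*k+1) := by
  intro h
  have h3 : (3:ℤ)^(2*k+1) = 3*9^k := by
    rw [pow_succ']
    congr 1
    rw [show (9:ℤ) = 3^2 by norm_num, ← pow_mul, mul_comm]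
  rcases sq3 x with ⟨x1, rfl⟩ | hx
  · exact L1 k x1 z y (by nlinarith [h, h3])
  · have : x^2 = 3*(2*9^k) - 3*y^2 - 9*z^2 := by rw [h3] at h; linarith [h]
    omega

lemma odd_sq_lift (t : ℤ) (ht : t % 8 = 1) :
    ∀ e : ℕ, ∃ x : ℤ, x % 2 = 1 ∧ (2:ℤ)^(e+3) ∣ x^2 - t := by
  intro e
  induction e with
  | zero => exact ⟨1, by norm_num, by norm_num; omega⟩
  | succ e ih =>
    obtain ⟨x, hx, s, hs⟩ := ih
    rcases Int.even_or_odd s with ⟨c, hc⟩ | ⟨c, hc⟩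
    · exact ⟨x, hx, ⟨c, by rw [hs, hc]; ring⟩⟩
    · obtain ⟨d, hd⟩ : ∃ d, x = 2*d + 1 := ⟨x/2, by omega⟩
      have hsx : s + x = 2*(c + d + 1) := by omega
      refine ⟨x + 2^(e+2), ?_, ⟨c + d + 1 + 2^e, ?_⟩⟩
      · have h2 : (2:ℤ) ∣ 2^(e+2) := dvd_pow_self 2 (by omega)
        omega
      · linear_combination hs + (2:ℤ)^(e+3) * hsx

lemma two_case (r : ℕ) (e : ℕ) (A : ℤ) :
    ∃ X Y Z W : ℤ, (2:ℤ)^e ∣ X^2 + 3*Y^2 + 9*Z^2 + 9^r*W^2 - A := by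
  obtain ⟨q, hq⟩ : ∃ q, (9:ℤ)^r = 8*q + 1 := by
    induction r with
    | zero => exact ⟨0, by norm_num⟩
    | succ r ih =>
      obtain ⟨q, hq⟩ := ih
      exact ⟨9*q + 1, by rw [pow_succ, hq]; ring⟩
  have key : ∃ Y Z W : ℤ, (A - (3*Y^2 + 9*Z^2 + 9^r*W^2)) % 8 = 1 := by
    have h8 : A % 8 = 0 ∨ A % 8 = 1 ∨ A % 8 = 2 ∨ A % 8 = 3 ∨ A % 8 = 4 ∨
        A % 8 = 5 ∨ A % 8 = 6 ∨ A % 8 = 7 := by omega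
    rcases h8 with h | h | h | h | h | h | h | h
    · exact ⟨1, 2, 0, by rw [hq]; ring_nf; omega⟩
    · exact ⟨0, 0, 0, by rw [hq]; ring_nf; omega⟩
    · exact ⟨0, 1, 0, by rw [hq]; ring_nf; omega⟩
    · exact ⟨0, 1, 1, by rw [hq]; ring_nf; omega⟩
    · exact ⟨1, 0, 0, by rw [hq]; ring_nf; omega⟩
    · exact ⟨2, 0, 0, by rw [hq]; ring_nf; omega⟩
    · exact ⟨0, 1, 2, by rw [hq]; ring_nf; omega⟩
    · exact ⟨2, 1, 1, by rw [hq]; ring_nf; omega⟩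
  obtain ⟨Y, Z, W, hYZW⟩ := key
  obtain ⟨x, -, hx⟩ := odd_sq_lift _ hYZW e
  refine ⟨x, Y, Z, W, ?_⟩
  have h3 : (2:ℤ)^(e+3) ∣ x^2 + 3*Y^2 + 9*Z^2 + 9^r*W^2 - A := by
    have : x^2 + 3*Y^2 + 9*Z^2 + 9^r*W^2 - A = x^2 - (A - (3*Y^2 + 9*Z^2 + 9^r*W^2)) := by ring
    rw [this]; exact hx
  exact dvd_trans (pow_dvd_pow 2 (by omega)) h3

open Polynomial in
lemma exists_sq_add_three_sq (p : ℕ) [hp : Fact p.Prime] (hp2 : p ≠ 2) (hp3 : p ≠ 3)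
    (u : ZMod p) : ∃ x y : ZMod p, x^2 + 3*y^2 = u := by
  have h3 : (3 : ZMod p) ≠ 0 := by
    intro h
    have hd : (p:ℕ) ∣ 3 := (ZMod.natCast_eq_zero_iff 3 p).mp (by exact_mod_cast h)
    exact hp3 ((Nat.prime_dvd_prime_iff_eq hp.1 (by norm_num)).mp hd)
  have hodd : p % 2 = 1 := hp.1.eq_two_or_odd.resolve_left hp2
  let f : (ZMod p)[X] := X ^ 2
  let g : (ZMod p)[X] := C 3 * X ^ 2 + C 0 * X + C (-u)
  obtain ⟨a, b, hab⟩ : ∃ a b, f.eval a + g.eval b = 0 :=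
    FiniteField.exists_root_sum_quadratic (degree_X_pow 2) (degree_quadratic h3)
      (by rw [ZMod.card, hodd])
  refine ⟨a, b, ?_⟩
  simp only [f, g, eval_add, eval_mul, eval_pow, eval_C, eval_X] at hab
  linear_combination hab

lemma hensel_lift (p : ℕ) (hp : p.Prime) (c x0 t : ℤ)
    (h1 : ¬ (p:ℤ) ∣ 2*c*x0) (h0 : (p:ℤ) ∣ c*x0^2 - t) :
    ∀ e : ℕ, ∃ x : ℤ, (p:ℤ)^(e+1) ∣ c*x^2 - t ∧ (p:ℤ) ∣ x - x0 := by
  have hpz : Prime (p:ℤ) := Nat.prime_iff_prime_int.mp hp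
  intro e
  induction e with
  | zero => exact ⟨x0, by simpa using h0, by simp⟩
  | succ e ih =>
    obtain ⟨x, ⟨s, hs⟩, hx⟩ := ih
    have hne : ¬ (p:ℤ) ∣ 2*c*x := by
      intro hd
      apply h1
      obtain ⟨j, hj⟩ := hx
      obtain ⟨l, hl⟩ := hd
      exact ⟨l - 2*c*j, by linear_combination hl - 2*c*hj⟩
    have hcop : IsCoprime (p:ℤ) (2*c*x) := (hpz.coprime_iff_not_dvd).mpr hne
    obtain ⟨uu, vv, huv⟩ := hcop
    refine ⟨x + (p:ℤ)^(e+1) * (-(s*vv)), ⟨s*uu + c*(p:ℤ)^e*(s*vv)^2, ?_⟩, ?_⟩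
    · have hd2 : s + 2*c*x*(-(s*vv)) = (p:ℤ)*(s*uu) := by linear_combination -s * huv
      linear_combination hs + (p:ℤ)^(e+1) * hd2
    · obtain ⟨j, hj⟩ := hx
      exact ⟨j + (p:ℤ)^e * (-(s*vv)), by rw [pow_succ]; linear_combination hj⟩

lemma odd_case (r : ℕ) (p : ℕ) (hp : p.Prime) (hp2 : p ≠ 2) (hp3 : p ≠ 3) (e : ℕ) (A : ℤ) :
    ∃ X Y Z W : ℤ, (p:ℤ)^e ∣ X^2 + 3*Y^2 + 9*Z^2 + 9^r*W^2 - A := by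
  haveI : Fact p.Prime := ⟨hp⟩
  rcases Nat.eq_zero_or_pos e with rfl | he
  · exact ⟨0,0,0,0, by simp⟩
  have hpz : Prime (p:ℤ) := Nat.prime_iff_prime_int.mp hp
  -- choose Z with p ∤ A - 9 Z²
  obtain ⟨Z, hZ⟩ : ∃ Z : ℤ, ¬ (p:ℤ) ∣ A - 9*Z^2 := by
    by_cases hA : (p:ℤ) ∣ A
    · refine ⟨1, fun hd => ?_⟩
      have h9 : (p:ℤ) ∣ 9 := by
        obtain ⟨j, hj⟩ := hA; obtain ⟨l, hl⟩ := hd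
        exact ⟨j - l, by linear_combination hj - hl⟩
      have hd : (p:ℕ) ∣ 9 := by exact_mod_cast h9
      have hd3 : (p:ℕ) ∣ 3 := hp.dvd_of_dvd_pow (n := 2) (by norm_num; exact hd)
      exact hp3 ((Nat.prime_dvd_prime_iff_eq hp (by norm_num)).mp hd3)
    · exact ⟨0, by simpa using hA⟩
  set u : ℤ := A - 9*Z^2 with hu
  -- solve x² + 3y² ≡ u mod p
  obtain ⟨x, y, hxy⟩ := exists_sq_add_three_sq p hp2 hp3 (u : ZMod p)
  obtain ⟨X0, Y0, hmod⟩ : ∃ X0 Y0 : ℤ, (p:ℤ) ∣ X0^2 + 3*Y0^2 - u := by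
    refine ⟨(x.val : ℤ), (y.val : ℤ), ?_⟩
    rw [← ZMod.intCast_zmod_eq_zero_iff_dvd]
    push_cast
    rw [ZMod.natCast_val, ZMod.natCast_val, ZMod.cast_id, ZMod.cast_id]
    linear_combination hxy
  by_cases hX : (p:ℤ) ∣ X0
  · have hY : ¬ (p:ℤ) ∣ Y0 := by
      intro hY
      apply hZ
      obtain ⟨j, hj⟩ := hX; obtain ⟨l, hl⟩ := hY; obtain ⟨k, hk⟩ := hmod
      exact ⟨(p:ℤ)*j^2 + 3*(p:ℤ)*l^2 - k, by linear_combination (X0 + (p:ℤ)*j)*hj + (3*Y0 + 3*(p:ℤ)*l)*hl - hk⟩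
    have h1 : ¬ (p:ℤ) ∣ 2*3*Y0 := by
      intro hd
      rcases (hpz.dvd_mul.mp hd) with hd | hd
      · rcases (hpz.dvd_mul.mp hd) with hd | hd
        · have : (p:ℕ) ∣ 2 := by exact_mod_cast hd
          exact hp2 ((Nat.prime_dvd_prime_iff_eq hp (by norm_num)).mp this)
        · have : (p:ℕ) ∣ 3 := by exact_mod_cast hd
          exact hp3 ((Nat.prime_dvd_prime_iff_eq hp (by norm_num)).mp this)
      · exact hY hd
    have h0 : (p:ℤ) ∣ 3*Y0^2 - (u - X0^2) := by
      obtain ⟨k, hk⟩ := hmod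
      exact ⟨k, by linear_combination hk⟩
    obtain ⟨y', hy', -⟩ := hensel_lift p hp 3 Y0 (u - X0^2) h1 h0 (e - 1)
    refine ⟨X0, y', Z, 0, ?_⟩
    have he1 : e - 1 + 1 = e := by omega
    rw [he1] at hy'
    obtain ⟨k, hk⟩ := hy'
    exact ⟨k, by linear_combination hk⟩
  · have h1 : ¬ (p:ℤ) ∣ 2*1*X0 := by
      intro hd
      rcases (hpz.dvd_mul.mp hd) with hd | hd
      · rcases (hpz.dvd_mul.mp hd) with hd | hd
        · have : (p:ℕ) ∣ 2 := by exact_mod_cast hd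
          exact hp2 ((Nat.prime_dvd_prime_iff_eq hp (by norm_num)).mp this)
        · exact hpz.not_dvd_one hd
      · exact hX hd
    have h0 : (p:ℤ) ∣ 1*X0^2 - (u - 3*Y0^2) := by
      obtain ⟨k, hk⟩ := hmod
      exact ⟨k, by linear_combination hk⟩
    obtain ⟨x', hx', -⟩ := hensel_lift p hp 1 X0 (u - 3*Y0^2) h1 h0 (e - 1)
    refine ⟨x', Y0, Z, 0, ?_⟩
    have he1 : e - 1 + 1 = e := by omega
    rw [he1] at hx'
    obtain ⟨k, hk⟩ := hx'
    exact ⟨k, by linear_combination hk⟩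

lemma int_crt {mm nn : ℤ} (h : IsCoprime mm nn) (A B : ℤ) :
    ∃ x : ℤ, mm ∣ x - A ∧ nn ∣ x - B := by
  obtain ⟨u, v, huv⟩ := h
  refine ⟨A*(v*nn) + B*(u*mm), ⟨u*(B-A), by linear_combination A*huv⟩,
    ⟨v*(A-B), by linear_combination B*huv⟩⟩

lemma solv (r : ℕ) : ∀ M : ℕ, ¬ 3 ∣ M → 0 < M → ∀ A : ℤ,
    ∃ X Y Z W : ℤ, (M:ℤ) ∣ X^2 + 3*Y^2 + 9*Z^2 + 9^r*W^2 - A := by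
  intro M
  induction M using Nat.strong_induction_on with
  | _ M ih =>
    intro h3 hM A
    rcases eq_or_lt_of_le (Nat.succ_le_of_lt hM) with h1 | h1
    · exact ⟨0,0,0,0, by rw [← h1]; exact one_dvd _⟩
    set p := M.minFac with hpdef
    have hp : p.Prime := Nat.minFac_prime (by omega)
    have hpdvd : p ∣ M := Nat.minFac_dvd M
    have hp3 : p ≠ 3 := fun h => h3 (h ▸ hpdvd)
    set v := M.factorization p with hv
    have hvpos : 0 < v := hp.factorization_pos_of_dvd (by omega) hpdvd
    set M' := M / p ^ v with hM'
    have hsplit : p ^ v * M' = M := Nat.ordProj_mul_ordCompl_eq_self M p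
    have hcop : Nat.Coprime (p ^ v) M' := (Nat.coprime_ordCompl hp (by omega)).pow_left _
    have hM'pos : 0 < M' := Nat.ordCompl_pos p (by omega)
    have hM'lt : M' < M := by
      have hpv : 1 < p ^ v := Nat.one_lt_pow (by omega) hp.one_lt
      calc M' < p ^ v * M' := by nlinarith
        _ = M := hsplit
    have h3' : ¬ 3 ∣ M' := fun hd => h3 (hd.trans (Nat.ordCompl_dvd M p))
    -- solution mod p^v
    obtain ⟨X1, Y1, Z1, W1, hs1⟩ :
        ∃ X Y Z W : ℤ, ((p:ℤ))^v ∣ X^2 + 3*Y^2 + 9*Z^2 + 9^r*W^2 - A := by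
      rcases eq_or_ne p 2 with hpe | hp2
      · rw [hpe]; exact_mod_cast two_case r v A
      · exact odd_case r p hp hp2 hp3 v A
    obtain ⟨X2, Y2, Z2, W2, hs2⟩ := ih M' hM'lt h3' hM'pos A
    have hcopz : IsCoprime ((p:ℤ)^v) ((M':ℕ):ℤ) := by
      have := Nat.isCoprime_iff_coprime.mpr hcop
      exact_mod_cast this
    obtain ⟨X, hX1, hX2⟩ := int_crt hcopz X1 X2
    obtain ⟨Y, hY1, hY2⟩ := int_crt hcopz Y1 Y2
    obtain ⟨Z, hZ1, hZ2⟩ := int_crt hcopz Z1 Z2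
    obtain ⟨W, hW1, hW2⟩ := int_crt hcopz W1 W2
    have key : ∀ (q : ℤ) (X' Y' Z' W' : ℤ),
        (q ∣ X'^2 + 3*Y'^2 + 9*Z'^2 + 9^r*W'^2 - A) → (q ∣ X - X') → (q ∣ Y - Y') →
        (q ∣ Z - Z') → (q ∣ W - W') →
        q ∣ X^2 + 3*Y^2 + 9*Z^2 + 9^r*W^2 - A := by
      intro q X' Y' Z' W' h0 hx hy hz hw
      have : X^2 + 3*Y^2 + 9*Z^2 + 9^r*W^2 - A =
          (X'^2 + 3*Y'^2 + 9*Z'^2 + 9^r*W'^2 - A) + (X - X')*(X + X') + 3*((Y - Y')*(Y + Y'))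
          + 9*((Z - Z')*(Z + Z')) + 9^r*((W - W')*(W + W')) := by ring
      rw [this]
      exact dvd_add (dvd_add (dvd_add (dvd_add h0 (hx.mul_right _)) ((hy.mul_right _).mul_left 3))
        ((hz.mul_right _).mul_left 9)) ((hw.mul_right _).mul_left _)
    refine ⟨X, Y, Z, W, ?_⟩
    have hMeq : (M:ℤ) = (p:ℤ)^v * (M':ℤ) := by exact_mod_cast (congrArg (Nat.cast) hsplit).symm
    rw [hMeq]
    exact hcopz.mul_dvd (key _ X1 Y1 Z1 W1 hs1 hX1 hY1 hZ1 hW1)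
      (key _ X2 Y2 Z2 W2 hs2 hX2 hY2 hZ2 hW2)




lemma nonrep0 (r : ℕ) (hr : 1 ≤ r) :
    ¬∃ x y z w : ℤ, (2:ℤ) = x^2 + 3*y^2 + 9*z^2 + 9^r*w^2 := by
  rintro ⟨x, y, z, w, h⟩
  obtain ⟨q9, h9⟩ : (3:ℤ) ∣ 9^r := dvd_pow (by norm_num) (by omega)
  rcases sq3 x with ⟨x1, rfl⟩ | hx
  · have hd : (3:ℤ) ∣ 2 := ⟨3*x1^2 + y^2 + 3*z^2 + q9*w^2, by linear_combination h + w^2*h9⟩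
    norm_num at hd
  · have hx2 : x^2 = 2 - 3*y^2 - 9*z^2 - 3*(q9*w^2) := by
      rw [h9] at h; linarith [h]
    omega

lemma nonrepk (r k : ℕ) (hk : k + 1 ≤ r) :
    ¬∃ x y z w : ℤ, (2*3^(2*k+1) : ℤ) = x^2 + 3*y^2 + 9*z^2 + 9^r*w^2 := by
  rintro ⟨x, y, z, w, h⟩
  rcases eq_or_ne w 0 with rfl | hw
  · exact L2 k x y z (by linear_combination -h)
  · have hw1 : (1:ℤ) ≤ w^2 := by
      have h0 : (0:ℤ) < w^2 := by positivity
      omega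
    have h9r : (9:ℤ)^r = 3^(2*r) := by
      rw [show (9:ℤ) = 3^2 by norm_num, ← pow_mul]
    have h9k : (3:ℤ)^(2*k+2) ≤ 3^(2*r) := pow_le_pow_right₀ (by norm_num) (by omega)
    have h9pos : (0:ℤ) < 3^(2*r) := by positivity
    have hge : (3:ℤ)^(2*r) ≤ 3^(2*r) * w^2 := le_mul_of_one_le_right (le_of_lt h9pos) hw1
    have hps : (3:ℤ)^(2*k+2) = 3*3^(2*k+1) := by ring
    have hp1 : (0:ℤ) < 3^(2*k+1) := by positivity
    rw [h9r] at h
    nlinarith [sq_nonneg x, sq_nonneg y, sq_nonneg z]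

lemma val_unique {n α β : ℕ} (hn : n ≠ 0) (h1 : 3^α ∣ n) (h2 : ¬3^(α+1) ∣ n)
    (h3 : 3^β ∣ n) (h4 : ¬3^(β+1) ∣ n) : α = β := by
  rcases lt_trichotomy α β with h | h | h
  · exact absurd (dvd_trans (pow_dvd_pow 3 (by omega)) h3) h2
  · exact h
  · exact absurd (dvd_trans (pow_dvd_pow 3 (by omega)) h1) h4

lemma ap_val_eq (r : ℕ) (hr : 1 ≤ r) (A M : ℕ) (hadm : Admissible A M)
    (hsub : ∀ n ∈ AP A M, ¬∃ x y z w : ℤ, (n:ℤ) = x^2 + 3*y^2 + 9*z^2 + 9^r*w^2)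
    (α β : ℕ) (hα : 2*3^α ∈ AP A M) (hβ : 2*3^β ∈ AP A M) : α = β := by
  obtain ⟨hA0, hAM, hadm3⟩ := hadm
  haveI : Fact (Nat.Prime 3) := ⟨by norm_num⟩
  by_cases h3 : 3 ∣ M
  · have hval := hadm3 3 (by norm_num) h3
    set c := padicValNat 3 A with hc
    have hcA : 3^c ∣ A := pow_padicValNat_dvd
    have hncA : ¬ 3^(c+1) ∣ A := pow_succ_padicValNat_not_dvd (by omega)
    have hcM : 3^(c+1) ∣ M := dvd_trans (pow_dvd_pow 3 (by omega)) pow_padicValNat_dvd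
    have gen : ∀ γ:ℕ, 2*3^γ ∈ AP A M → γ = c := by
      rintro γ ⟨x, hx⟩
      have d1 : 3^c ∣ 2*3^γ := by
        rw [hx]
        exact dvd_add hcA ((dvd_trans (pow_dvd_pow 3 (by omega)) hcM).mul_right x)
      have d2 : ¬ 3^(c+1) ∣ 2*3^γ := by
        intro hd
        apply hncA
        have hA : A = 2*3^γ - M*x := by omega
        rw [hA]
        exact Nat.dvd_sub hd (hcM.mul_right x)
      have d3 : 3^γ ∣ 2*3^γ := Dvd.intro_left 2 rfl
      have d4 : ¬ 3^(γ+1) ∣ 2*3^γ := by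
        intro hd
        have hle := Nat.le_of_dvd (by positivity) hd
        have hps : 3^(γ+1) = 3*3^γ := by ring
        have hp1 : 0 < 3^γ := by positivity
        omega
      exact val_unique (by positivity) d3 d4 d1 d2
    exact (gen α hα).trans (gen β hβ).symm
  · exfalso
    have hM2 : 2 ≤ M := by omega
    obtain ⟨X, Y, Z, W, hdvd⟩ := solv r M h3 (by omega) (A:ℤ)
    set j : ℤ := |X| + (A:ℤ) + 1 with hj
    set X' : ℤ := X + (M:ℤ)*j with hX'
    have hj0 : 0 ≤ j := by
      have := abs_nonneg X
      have : (0:ℤ) ≤ (A:ℤ) := Int.natCast_nonneg A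
      positivity
    obtain ⟨d0, hd0⟩ := hdvd
    have h2 : X'^2 + 3*Y^2 + 9*Z^2 + 9^r*W^2 - (A:ℤ) = (M:ℤ)*(d0 + 2*X*j + (M:ℤ)*j^2) := by
      rw [hX']; linear_combination hd0
    have h2j : 2*j ≤ (M:ℤ)*j := by
      have : (2:ℤ) ≤ (M:ℤ) := by exact_mod_cast hM2
      exact mul_le_mul_of_nonneg_right this hj0
    have hX'ge : (A:ℤ) + 1 ≤ X' := by
      have h1 := neg_abs_le X
      have h2' := abs_nonneg X
      have h3' : (0:ℤ) ≤ (A:ℤ) := Int.natCast_nonneg A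
      rw [hX']
      linarith [h2j]
    have h9W : (0:ℤ) ≤ (9:ℤ)^r*W^2 := by positivity
    have hsq : X'^2 ≥ 2*X' - 1 := by nlinarith [sq_nonneg (X'-1)]
    have hFge : 0 ≤ X'^2 + 3*Y^2 + 9*Z^2 + 9^r*W^2 - (A:ℤ) := by
      have h3' : (0:ℤ) ≤ (A:ℤ) := Int.natCast_nonneg A
      nlinarith [sq_nonneg Y, sq_nonneg Z]
    set D : ℤ := d0 + 2*X*j + (M:ℤ)*j^2 with hD
    have hD0 : 0 ≤ D := by
      by_contra hneg
      push_neg at hneg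
      have hMpos : (0:ℤ) < (M:ℤ) := by exact_mod_cast (by omega : 0 < M)
      nlinarith
    have hmemAP : A + M * D.toNat ∈ AP A M := ⟨D.toNat, rfl⟩
    apply hsub _ hmemAP
    refine ⟨X', Y, Z, W, ?_⟩
    push_cast
    rw [Int.toNat_of_nonneg hD0]
    linear_combination -h2

theorem excluded_set_needs_at_least_r_add_one_APs
    (r : ℕ) (hr : 1 ≤ r) (t : ℕ) (a m : Fin t → ℕ)
    (hadm : ∀ i, Admissible (a i) (m i))
    (hE : {n : ℕ | 0 < n ∧
        ¬∃ x y z w : ℤ, (n : ℤ) = x ^ 2 + 3 * y ^ 2 + 9 * z ^ 2 + 9 ^ r * w ^ 2}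
      = ⋃ i, AP (a i) (m i)) :
    r + 1 ≤ t := by
  classical
  have hmem : ∀ k : Fin (r+1), ∃ i : Fin t, (2*3^(2*(k:ℕ)-1)) ∈ AP (a i) (m i) := by
    intro k
    have hk : (k:ℕ) ≤ r := by omega
    have hEk : (2*3^(2*(k:ℕ)-1) : ℕ) ∈ {n : ℕ | 0 < n ∧
        ¬∃ x y z w : ℤ, (n : ℤ) = x ^ 2 + 3 * y ^ 2 + 9 * z ^ 2 + 9 ^ r * w ^ 2} := by
      constructor
      · positivity
      · rcases Nat.eq_zero_or_pos (k:ℕ) with hk0 | hk1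
        · rw [hk0]
          norm_num
          intro x y z w hx
          exact nonrep0 r hr ⟨x, y, z, w, by push_cast at hx ⊢; linarith [hx]⟩
        · obtain ⟨k', hk'⟩ : ∃ k', (k:ℕ) = k' + 1 := ⟨(k:ℕ) - 1, by omega⟩
          intro ⟨x, y, z, w, hx⟩
          apply nonrepk r k' (by omega)
          refine ⟨x, y, z, w, ?_⟩
          have he : 2*(k:ℕ) - 1 = 2*k' + 1 := by omega
          rw [he] at hx
          push_cast at hx ⊢
          linarith [hx]
    rw [hE] at hEk
    exact Set.mem_iUnion.mp hEk
  choose f hf using hmem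
  have hinj : Function.Injective f := by
    intro k k' hff
    have h1 := hf k
    have h2 := hf k'
    rw [hff] at h1
    have hsub : ∀ n ∈ AP (a (f k')) (m (f k')),
        ¬∃ x y z w : ℤ, (n:ℤ) = x^2 + 3*y^2 + 9*z^2 + 9^r*w^2 := by
      intro n hn
      have hnE : n ∈ {n : ℕ | 0 < n ∧
          ¬∃ x y z w : ℤ, (n : ℤ) = x ^ 2 + 3 * y ^ 2 + 9 * z ^ 2 + 9 ^ r * w ^ 2} := by
        rw [hE]
        exact Set.mem_iUnion.mpr ⟨f k', hn⟩
      exact hnE.2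
    have heq := ap_val_eq r hr _ _ (hadm (f k')) hsub _ _ h1 h2
    have : (k:ℕ) = (k':ℕ) := by omega
    exact Fin.ext this
  have := Fintype.card_le_of_injective f hinj
  simpa using this
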